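/- Let X be a metric space, f and g_n continuous with g_n ≥ f, and suppose that for every compact set C ⊆ X there is n₀ with g_n = f on C for all n ≥ n₀ (stationary convergence on compacts). Then F(x) = inf { (n+1)f(x) − n g_n(x) : n ≥ 1 } defines a continuous real-valued function on X. -/
import Mathlib

open Set Topology Filter

/-- If g_n ≥ f (all continuous) and on every compact set g_n coincides with f eventually,
then F(x) = inf_{n ≥ 1} ((n+1) f(x) - n g_n(x)) is a continuous real-valued function. -/
theorem inf_of_stationary_sequence_continuous
    {X : Type*} [MetricSpace X]
    (f : X → ℝ) (hf : Continuous f)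
    (g : ℕ → X → ℝ) (hg : ∀ n, Continuous (g n))
    (hge : ∀ n x, f x ≤ g n x)
    (hstat : ∀ C : Set X, IsCompact C → ∃ n₀, ∀ n ≥ n₀, ∀ x ∈ C, g n x = f x)
    (F : X → ℝ)
    (hF : ∀ x, F x = ⨅ n : {n : ℕ // 1 ≤ n}, (((n : ℕ) + 1) * f x - (n : ℕ) * g n x)) :
    Continuous F := by
  rw [continuous_iff_seqContinuous]
  intro u x hu
  have hC : IsCompact (insert x (Set.range u)) := hu.isCompact_insert_range
  obtain ⟨m, hm⟩ := hstat _ hC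
  set n₀ := max m 1 with hn₀
  have h1 : 1 ≤ n₀ := le_max_right _ _
  have hm' : ∀ n, n₀ ≤ n → ∀ y ∈ insert x (Set.range u), g n y = f y :=
    fun n hn => hm n (le_trans (le_max_left _ _) hn)
  have hne : (Finset.Icc 1 n₀).Nonempty := ⟨n₀, by simp [h1]⟩
  set G : X → ℝ :=
    fun y => (Finset.Icc 1 n₀).inf' hne (fun n => ((n : ℝ) + 1) * f y - (n : ℝ) * g n y)
    with hG
  have hGc : Continuous G :=
    Continuous.finset_inf'_apply hne fun n _ =>
      ((continuous_const.mul hf).sub (continuous_const.mul (hg n)))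
  have key : ∀ y ∈ insert x (Set.range u), F y = G y := by
    intro y hy
    have hterm : ∀ n : {n : ℕ // 1 ≤ n}, n₀ ≤ (n : ℕ) →
        ((n : ℕ) + 1 : ℝ) * f y - (n : ℕ) * g n y = f y := by
      intro n hn
      rw [hm' n hn y hy]; ring
    have hGle : ∀ n : {n : ℕ // 1 ≤ n},
        G y ≤ ((n : ℕ) + 1 : ℝ) * f y - (n : ℕ) * g n y := by
      intro n
      rcases le_or_gt (n : ℕ) n₀ with h | h
      · exact Finset.inf'_le _ (Finset.mem_Icc.mpr ⟨n.2, h⟩)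
      · rw [hterm n h.le]
        have hn₀mem : n₀ ∈ Finset.Icc 1 n₀ := Finset.mem_Icc.mpr ⟨h1, le_rfl⟩
        have := Finset.inf'_le (fun n : ℕ => ((n : ℝ) + 1) * f y - (n : ℝ) * g n y) hn₀mem
        have hgn₀ : g n₀ y = f y := hm' n₀ le_rfl y hy
        calc G y ≤ ((n₀ : ℝ) + 1) * f y - (n₀ : ℝ) * g n₀ y := this
          _ = f y := by rw [hgn₀]; ring
    have hbdd : BddBelow (Set.range fun n : {n : ℕ // 1 ≤ n} =>
        ((n : ℕ) + 1 : ℝ) * f y - (n : ℕ) * g n y) := by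
      refine ⟨G y, ?_⟩
      rintro _ ⟨n, rfl⟩
      exact hGle n
    rw [hF]
    refine le_antisymm ?_ (le_ciInf hGle)
    obtain ⟨k, hkmem, hk⟩ :=
      (Finset.Icc 1 n₀).exists_mem_eq_inf' hne (fun n : ℕ => ((n : ℝ) + 1) * f y - (n : ℝ) * g n y)
    have : G y = ((k : ℝ) + 1) * f y - (k : ℝ) * g k y := hk
    rw [this]
    exact ciInf_le hbdd ⟨k, (Finset.mem_Icc.mp hkmem).1⟩
  have heq : (F ∘ u) = (G ∘ u) :=
    funext fun k => key _ (Set.mem_insert_of_mem _ ⟨k, rfl⟩)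
  have hx : F x = G x := key x (Set.mem_insert _ _)
  rw [heq, hx]
  exact (hGc.tendsto x).comp hu
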